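/- arXiv:2405.17879 — 2 statements merged into one kernel-verified Lean document; each statement's English description precedes it below -/
import Mathlib

section
/- For every ε ∈ (0, 1/2), the inequality (1/2)·[1 − erf((1 − 2ε)/√(4·ε·(1−ε)))] < ε holds. -/
open Real MeasureTheory intervalIntegral Set Filter

/-- The error function `erf z = (2/√π) · ∫_0^z exp(-t²) dt`. -/
noncomputable def erf (z : ℝ) : ℝ :=
  (2 / Real.sqrt Real.pi) * ∫ t in (0:ℝ)..z, Real.exp (-t ^ 2)

lemma gauss_cont : Continuous (fun t : ℝ => Real.exp (-t ^ 2)) := by continuity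

lemma gauss_integrableOn : IntegrableOn (fun t : ℝ => Real.exp (-t ^ 2)) (Ioi 0) := by
  have := (integrable_exp_neg_mul_sq (b := (1:ℝ)) one_pos).integrableOn (s := Ioi 0)
  simpa using this

lemma hasDerivAt_erf (x : ℝ) :
    HasDerivAt erf (2 / Real.sqrt Real.pi * Real.exp (-x ^ 2)) x := by
  have h : HasDerivAt (fun u => ∫ t in (0:ℝ)..u, Real.exp (-t ^ 2))
      (Real.exp (-x ^ 2)) x :=
    integral_hasDerivAt_right (gauss_cont.intervalIntegrable _ _)
      (gauss_cont.stronglyMeasurableAtFilter _ _) gauss_cont.continuousAt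
  exact h.const_mul (2 / Real.sqrt Real.pi)

lemma erf_tendsto : Tendsto erf atTop (nhds 1) := by
  have h : Tendsto (fun x : ℝ => ∫ t in (0:ℝ)..x, Real.exp (-t ^ 2)) atTop
      (nhds (∫ t in Ioi (0:ℝ), Real.exp (-t ^ 2))) :=
    intervalIntegral_tendsto_integral_Ioi 0 gauss_integrableOn tendsto_id
  have h2 : (∫ t in Ioi (0:ℝ), Real.exp (-t ^ 2)) = Real.sqrt Real.pi / 2 := by
    have := integral_gaussian_Ioi 1
    simpa using this
  have hπ : Real.sqrt Real.pi ≠ 0 := by positivity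
  have := (h.const_mul (2 / Real.sqrt Real.pi))
  rw [h2] at this
  have h3 : 2 / Real.sqrt Real.pi * (Real.sqrt Real.pi / 2) = 1 := by
    field_simp
  rw [h3] at this
  exact this

noncomputable def rr (x : ℝ) : ℝ := x / Real.sqrt (1 + x ^ 2)

lemma one_add_sq_pos (x : ℝ) : (0:ℝ) < 1 + x ^ 2 := by positivity

lemma sqrt_one_add_sq_pos (x : ℝ) : (0:ℝ) < Real.sqrt (1 + x ^ 2) :=
  Real.sqrt_pos.2 (one_add_sq_pos x)

lemma hasDerivAt_rr (x : ℝ) :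
    HasDerivAt rr (((1 + x ^ 2) * Real.sqrt (1 + x ^ 2))⁻¹) x := by
  have h1 : HasDerivAt (fun y : ℝ => 1 + y ^ 2) (2 * x) x := by
    simpa using ((hasDerivAt_pow 2 x).const_add 1)
  have h2 : HasDerivAt (fun y : ℝ => Real.sqrt (1 + y ^ 2))
      (1 / (2 * Real.sqrt (1 + x ^ 2)) * (2 * x)) x :=
    (Real.hasDerivAt_sqrt (ne_of_gt (one_add_sq_pos x))).comp x h1
  have h3 := (hasDerivAt_id x).div h2 (ne_of_gt (sqrt_one_add_sq_pos x))
  have hu := sqrt_one_add_sq_pos x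
  have hsq : Real.sqrt (1 + x ^ 2) ^ 2 = 1 + x ^ 2 := Real.sq_sqrt (one_add_sq_pos x).le
  refine HasDerivAt.congr_deriv h3 ?_
  symm
  set u := Real.sqrt (1 + x ^ 2) with hudef
  rw [← hsq]
  have hu' : u ≠ 0 := ne_of_gt hu
  field_simp
  simp only [id_eq]
  linear_combination (-1) * hsq

lemma rr_tendsto : Tendsto rr atTop (nhds 1) := by
  have h1 : Tendsto (fun x : ℝ => (1 + x ^ 2)⁻¹) atTop (nhds 0) := by
    apply Tendsto.inv_tendsto_atTop
    apply tendsto_atTop_add_const_left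
    exact tendsto_pow_atTop (by norm_num)
  have hc : Continuous (fun y : ℝ => Real.sqrt (1 - y)) :=
    (continuous_const.sub continuous_id).sqrt
  have h2 : Tendsto (fun x : ℝ => Real.sqrt (1 - (1 + x ^ 2)⁻¹)) atTop (nhds 1) := by
    have := (hc.tendsto 0).comp h1
    simpa [Function.comp_def] using this
  apply h2.congr'
  filter_upwards [eventually_gt_atTop (0:ℝ)] with x hx
  have hpos := one_add_sq_pos x
  have h4 : 1 - (1 + x ^ 2)⁻¹ = x ^ 2 / (1 + x ^ 2) := by field_simp; ring
  rw [h4, Real.sqrt_div (sq_nonneg x), Real.sqrt_sq hx.le, rr]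

noncomputable def G (x : ℝ) : ℝ := x ^ 2 - (3/2) * Real.log (1 + x ^ 2)

noncomputable def k : ℝ := Real.log (2 / Real.sqrt Real.pi)

lemma one_add_sq_pos' (x : ℝ) : (0:ℝ) < 1 + x ^ 2 := by positivity

lemma hasDerivAt_G (x : ℝ) : HasDerivAt G (2 * x - (3/2) * ((1 + x ^ 2)⁻¹ * (2 * x))) x := by
  have h1 : HasDerivAt (fun y : ℝ => 1 + y ^ 2) (2 * x) x := by
    simpa using ((hasDerivAt_pow 2 x).const_add 1)
  have h2 : HasDerivAt (fun y : ℝ => Real.log (1 + y ^ 2)) ((1 + x ^ 2)⁻¹ * (2 * x)) x :=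
    by have := (Real.hasDerivAt_log (ne_of_gt (one_add_sq_pos' x))).comp x h1; exact this
  have h3 : HasDerivAt (fun y : ℝ => y ^ 2) (2 * x) x := by simpa using hasDerivAt_pow 2 x
  exact h3.sub (h2.const_mul (3/2))

lemma G_cont : Continuous G := by
  have : Differentiable ℝ G := fun x => (hasDerivAt_G x).differentiableAt
  exact this.continuous

lemma k_pos : 0 < k := by
  apply Real.log_pos
  have h1 : Real.sqrt Real.pi < 2 := by
    rw [show (2:ℝ) = Real.sqrt 4 by
      rw [show (4:ℝ) = 2 ^ 2 by norm_num, Real.sqrt_sq]; norm_num]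
    exact Real.sqrt_lt_sqrt Real.pi_pos.le (by nlinarith [Real.pi_lt_d2])
  have h2 : 0 < Real.sqrt Real.pi := Real.sqrt_pos.2 Real.pi_pos
  rw [lt_div_iff₀ h2]
  linarith

lemma log_three_halves : (1:ℝ)/3 < Real.log (3/2) := by
  rw [Real.lt_log_iff_exp_lt (by norm_num : (0:ℝ) < 3/2)]
  have h1 : Real.exp (1/3) ^ 3 = Real.exp 1 := by
    rw [← Real.exp_nat_mul]; norm_num
  by_contra h
  push_neg at h
  have h3 : (3/2:ℝ) ^ 3 ≤ Real.exp (1/3) ^ 3 := pow_le_pow_left₀ (by norm_num) h 3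
  rw [h1] at h3
  nlinarith [Real.exp_one_lt_d9]

lemma G_a_nonpos : G (Real.sqrt (1/2)) ≤ 0 := by
  have ha : Real.sqrt (1/2) ^ 2 = 1/2 := Real.sq_sqrt (by norm_num)
  have := log_three_halves
  simp only [G, ha]
  have : (1:ℝ) + 1/2 = 3/2 := by norm_num
  rw [this]
  linarith [log_three_halves]

lemma k_lt_G_two : k < G 2 := by
  have h2 : (0:ℝ) < Real.sqrt Real.pi := Real.sqrt_pos.2 Real.pi_pos
  have hπ1 : (1:ℝ) ≤ Real.sqrt Real.pi := by
    rw [show (1:ℝ) = Real.sqrt 1 by simp]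
    exact Real.sqrt_le_sqrt (by linarith [Real.pi_gt_three])
  have hk : k ≤ Real.log 2 := by
    apply Real.log_le_log (by positivity)
    exact div_le_self (by norm_num) hπ1
  have h5 : Real.log 5 < 3 * Real.log 2 := by
    have : Real.log 5 < Real.log 8 := Real.log_lt_log (by norm_num) (by norm_num)
    have h8 : Real.log 8 = 3 * Real.log 2 := by
      rw [show (8:ℝ) = 2 ^ 3 by norm_num, Real.log_pow]; norm_num
    linarith
  have hl2 := Real.log_two_lt_d9
  simp only [G]
  have : (1:ℝ) + 2 ^ 2 = 5 := by norm_num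
  rw [this]
  nlinarith

lemma G_strictMonoOn : StrictMonoOn G (Ici (Real.sqrt (1/2))) := by
  apply strictMonoOn_of_deriv_pos (convex_Ici _) G_cont.continuousOn
  intro x hx
  rw [interior_Ici] at hx
  have hx0 : 0 < x := lt_of_le_of_lt (Real.sqrt_nonneg _) hx
  have hx2 : 1/2 < x ^ 2 := by
    have h' : Real.sqrt (1/2) ^ 2 < x ^ 2 := pow_lt_pow_left₀ hx (Real.sqrt_nonneg _) (by norm_num)
    rwa [Real.sq_sqrt (by norm_num : (0:ℝ) ≤ 1/2)] at h'
  rw [(hasDerivAt_G x).deriv]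
  have hpos := one_add_sq_pos' x
  rw [show 2 * x - (3/2) * ((1 + x ^ 2)⁻¹ * (2 * x)) = (2 * x ^ 3 - x) / (1 + x ^ 2) by
    field_simp; ring]
  apply div_pos (by nlinarith) hpos

lemma G_antitoneOn : AntitoneOn G (Icc 0 (Real.sqrt (1/2))) := by
  apply antitoneOn_of_deriv_nonpos (convex_Icc _ _) G_cont.continuousOn
  · exact fun x _ => (hasDerivAt_G x).differentiableAt.differentiableWithinAt
  intro x hx
  rw [interior_Icc] at hx
  obtain ⟨hx0, hx1⟩ := hx
  have hx2 : x ^ 2 < 1/2 := by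
    have h' : x ^ 2 < Real.sqrt (1/2) ^ 2 := pow_lt_pow_left₀ hx1 hx0.le (by norm_num)
    rwa [Real.sq_sqrt (by norm_num : (0:ℝ) ≤ 1/2)] at h'
  rw [(hasDerivAt_G x).deriv]
  have hpos := one_add_sq_pos' x
  rw [show 2 * x - (3/2) * ((1 + x ^ 2)⁻¹ * (2 * x)) = (2 * x ^ 3 - x) / (1 + x ^ 2) by
    field_simp; ring]
  apply div_nonpos_of_nonpos_of_nonneg (by nlinarith) hpos.le

lemma G_zero : G 0 = 0 := by simp [G]

lemma exists_c : ∃ c ∈ Icc (Real.sqrt (1/2)) 2, G c = k ∧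
    (∀ x, 0 ≤ x → x < c → G x < k) ∧ (∀ x, c < x → k < G x) := by
  have ha2 : Real.sqrt (1/2) ≤ 2 := by
    calc Real.sqrt (1/2) ≤ Real.sqrt 1 := Real.sqrt_le_sqrt (by norm_num)
      _ = 1 := Real.sqrt_one
      _ ≤ 2 := by norm_num
  have hmem : k ∈ Icc (G (Real.sqrt (1/2))) (G 2) :=
    ⟨le_trans G_a_nonpos k_pos.le, k_lt_G_two.le⟩
  obtain ⟨c, hc, hGc⟩ := intermediate_value_Icc ha2 G_cont.continuousOn hmem
  refine ⟨c, hc, hGc, ?_, ?_⟩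
  · intro x hx0 hxc
    rcases le_or_gt x (Real.sqrt (1/2)) with h | h
    · have := G_antitoneOn ⟨le_rfl, Real.sqrt_nonneg _⟩ ⟨hx0, h⟩ hx0
      rw [G_zero] at this
      calc G x ≤ 0 := this
        _ < k := k_pos
    · have := G_strictMonoOn (le_of_lt h) hc.1 hxc
      rwa [hGc] at this
  · intro x hcx
    have := G_strictMonoOn hc.1 (le_trans hc.1 (le_of_lt hcx)) hcx
    rwa [hGc] at this

lemma deriv_sign (x : ℝ) :
    (G x < k → ((1 + x ^ 2) * Real.sqrt (1 + x ^ 2))⁻¹ < 2 / Real.sqrt Real.pi * Real.exp (-x ^ 2)) ∧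
    (k < G x → 2 / Real.sqrt Real.pi * Real.exp (-x ^ 2) < ((1 + x ^ 2) * Real.sqrt (1 + x ^ 2))⁻¹) := by
  have hpos := one_add_sq_pos x
  have hspos := sqrt_one_add_sq_pos x
  have hA : (0:ℝ) < ((1 + x ^ 2) * Real.sqrt (1 + x ^ 2))⁻¹ := by positivity
  have hπ : (0:ℝ) < Real.sqrt Real.pi := Real.sqrt_pos.2 Real.pi_pos
  have hB : (0:ℝ) < 2 / Real.sqrt Real.pi * Real.exp (-x ^ 2) := by positivity
  have hlogA : Real.log (((1 + x ^ 2) * Real.sqrt (1 + x ^ 2))⁻¹)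
      = -(Real.log (1 + x ^ 2) + Real.log (1 + x ^ 2) / 2) := by
    rw [Real.log_inv, Real.log_mul (ne_of_gt hpos) (ne_of_gt hspos), Real.log_sqrt hpos.le]
  have hlogB : Real.log (2 / Real.sqrt Real.pi * Real.exp (-x ^ 2)) = k - x ^ 2 := by
    rw [Real.log_mul (by positivity) (Real.exp_ne_zero _), Real.log_exp, k]
    ring
  constructor
  · intro h
    rw [← Real.log_lt_log_iff hA hB, hlogA, hlogB]
    simp only [G] at h
    linarith
  · intro h
    rw [← Real.log_lt_log_iff hB hA, hlogA, hlogB]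
    simp only [G] at h
    linarith

noncomputable def ff (x : ℝ) : ℝ := erf x - rr x

lemma hasDerivAt_ff (x : ℝ) : HasDerivAt ff
    (2 / Real.sqrt Real.pi * Real.exp (-x ^ 2) - ((1 + x ^ 2) * Real.sqrt (1 + x ^ 2))⁻¹) x :=
  (hasDerivAt_erf x).sub (hasDerivAt_rr x)

lemma ff_cont : Continuous ff :=
  Differentiable.continuous (fun x => (hasDerivAt_ff x).differentiableAt)

lemma rr_lt_erf {x : ℝ} (hx : 0 < x) : rr x < erf x := by
  obtain ⟨c, hc, _hGc, hlt, hgt⟩ := exists_c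
  have hc0 : 0 < c := lt_of_lt_of_le (Real.sqrt_pos.2 (by norm_num)) hc.1
  have mono : StrictMonoOn ff (Icc 0 c) := by
    apply strictMonoOn_of_deriv_pos (convex_Icc _ _) ff_cont.continuousOn
    intro y hy
    rw [interior_Icc] at hy
    rw [(hasDerivAt_ff y).deriv]
    have := (deriv_sign y).1 (hlt y hy.1.le hy.2)
    linarith
  have anti : StrictAntiOn ff (Ici c) := by
    apply strictAntiOn_of_deriv_neg (convex_Ici _) ff_cont.continuousOn
    intro y hy
    rw [interior_Ici] at hy
    rw [(hasDerivAt_ff y).deriv]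
    have := (deriv_sign y).2 (hgt y hy)
    linarith
  have f0 : ff 0 = 0 := by simp [ff, erf, rr]
  have ftend : Tendsto ff atTop (nhds 0) := by
    have := erf_tendsto.sub rr_tendsto
    rw [sub_self] at this
    exact this
  have hnonneg : ∀ y, c ≤ y → 0 ≤ ff y := by
    intro y hy
    refine le_of_tendsto ftend ?_
    filter_upwards [eventually_gt_atTop y] with z hz
    exact (anti hy (hy.trans hz.le) hz).le
  have key : 0 < ff x := by
    rcases le_or_gt x c with h | h
    · have := mono ⟨le_rfl, hc0.le⟩ ⟨hx.le, h⟩ hx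
      rwa [f0] at this
    · have h1 := anti (Set.mem_Ici.2 le_rfl) (le_of_lt h) h
      have h2 := hnonneg x (le_of_lt h)
      have h3 := anti (le_of_lt h) (by linarith : c ≤ x + 1) (by linarith)
      have h4 := hnonneg (x + 1) (by linarith)
      linarith
  simpa [ff, sub_pos] using key

/-- For every `ε ∈ (0, 1/2)`, `(1/2)·[1 - erf((1 - 2ε)/√(4·ε·(1-ε)))] < ε`. -/
theorem Pupper_two_lt (ε : ℝ) (hε : ε ∈ Set.Ioo (0 : ℝ) (1 / 2)) :
    (1 / 2) * (1 - erf ((1 - 2 * ε) / Real.sqrt (4 * ε * (1 - ε)))) < ε := by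
  obtain ⟨hε0, hε2⟩ := hε
  set d := Real.sqrt (4 * ε * (1 - ε)) with hddef
  have hdp : (0:ℝ) < 4 * ε * (1 - ε) := by nlinarith
  have hd : 0 < d := Real.sqrt_pos.2 hdp
  have hd2 : d ^ 2 = 4 * ε * (1 - ε) := Real.sq_sqrt hdp.le
  set x := (1 - 2 * ε) / d with hxdef
  have hx : 0 < x := div_pos (by linarith) hd
  have h1 : 1 + x ^ 2 = (1 / d) ^ 2 := by
    rw [hxdef]
    field_simp
    nlinarith
  have h2 : Real.sqrt (1 + x ^ 2) = 1 / d := by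
    rw [h1, Real.sqrt_sq (by positivity)]
  have hrr : rr x = 1 - 2 * ε := by
    rw [rr, h2, hxdef]
    field_simp
  have := rr_lt_erf hx
  rw [hrr] at this
  linarith
end

section
/- For every integer n ≥ 2 and every ε ∈ (0, 1/2), the bound P^upper(n; ε) = (1/2)·[1 − erf((n/2 − n·ε)/√(2·n·ε·(1−ε)))] satisfies P^upper(n; ε) ≤ P^upper(2; ε) < ε. -/
/-- `P^upper(n; ε) = (1/2)·[1 - erf((n/2 - n·ε)/√(2·n·ε·(1-ε)))]`. -/
noncomputable def Pupper (n : ℕ) (ε : ℝ) : ℝ :=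
  (1 / 2) * (1 - erf (((n : ℝ) / 2 - (n : ℝ) * ε) / Real.sqrt (2 * (n : ℝ) * ε * (1 - ε))))

section Aux
open Real MeasureTheory Set intervalIntegral


lemma hasDerivAt_aux (t : ℝ) :
    HasDerivAt (fun y : ℝ => y / Real.sqrt (1 + y ^ 2))
      (1 / ((1 + t ^ 2) * Real.sqrt (1 + t ^ 2))) t := by
  have hpos : (0:ℝ) < 1 + t ^ 2 := by positivity
  have hsq : HasDerivAt (fun y : ℝ => 1 + y ^ 2) (2 * t) t := by
    simpa using ((hasDerivAt_pow 2 t).const_add 1)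
  have hsqrt : HasDerivAt (fun y : ℝ => Real.sqrt (1 + y ^ 2))
      (2 * t / (2 * Real.sqrt (1 + t ^ 2))) t := hsq.sqrt hpos.ne'
  have hspos : 0 < Real.sqrt (1 + t ^ 2) := Real.sqrt_pos.2 hpos
  have hdiv := (hasDerivAt_id t).div hsqrt hspos.ne'
  refine hdiv.congr_deriv ?_
  symm
  have hs2 : Real.sqrt (1 + t ^ 2) ^ 2 = 1 + t ^ 2 := Real.sq_sqrt hpos.le
  rw [id, Real.sq_sqrt hpos.le]
  rw [div_eq_div_iff (by positivity) hpos.ne']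
  field_simp
  linear_combination (-1 : ℝ) * hs2

lemma cont_g : Continuous (fun t : ℝ => 1 / ((1 + t ^ 2) * Real.sqrt (1 + t ^ 2))) := by
  apply Continuous.div continuous_const
  · exact ((continuous_const.add (continuous_pow 2)).mul
      ((continuous_const.add (continuous_pow 2)).sqrt))
  · intro t
    have h1 : (0:ℝ) < 1 + t ^ 2 := by positivity
    positivity

lemma ftc_g (x : ℝ) :
    ∫ t in (0:ℝ)..x, 1 / ((1 + t ^ 2) * Real.sqrt (1 + t ^ 2))
      = x / Real.sqrt (1 + x ^ 2) := by
  have := intervalIntegral.integral_eq_sub_of_hasDerivAt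
    (f := fun y : ℝ => y / Real.sqrt (1 + y ^ 2))
    (f' := fun t : ℝ => 1 / ((1 + t ^ 2) * Real.sqrt (1 + t ^ 2)))
    (a := 0) (b := x) (fun t _ => hasDerivAt_aux t)
    (cont_g.intervalIntegrable 0 x)
  simpa using this

-- pointwise inequality on [0, 0.85]
lemma pointwise_lt {t : ℝ} (ht : 0 ≤ t) (ht2 : t ^ 2 ≤ 0.7225) :
    1 / ((1 + t ^ 2) * Real.sqrt (1 + t ^ 2))
      < 2 / Real.sqrt Real.pi * Real.exp (-t ^ 2) := by
  set u := t ^ 2 with hu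
  have hu0 : 0 ≤ u := by positivity
  -- e^{-u/3} ≥ 1 - u/3 ≥ 0
  have h1 : 1 - u / 3 ≤ Real.exp (-(u / 3)) := by
    have := Real.add_one_le_exp (-(u/3)); linarith
  have h1' : (0:ℝ) ≤ 1 - u / 3 := by linarith [ht2]
  have h6 : (1 - u / 3) ^ 6 ≤ Real.exp (-(2 * u)) := by
    calc (1 - u / 3) ^ 6 ≤ Real.exp (-(u/3)) ^ 6 := by
          exact pow_le_pow_left₀ h1' h1 6
      _ = Real.exp (-(2 * u)) := by
          rw [← Real.exp_nat_mul]; ring_nf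
  -- polynomial bound : 4 (1+u)^3 (1-u/3)^6 > 3.15
  have hr : (0.95 : ℝ) ≤ (1 + u) * (1 - u / 3) ^ 2 := by nlinarith [sq_nonneg u, sq_nonneg (u - 0.7225), mul_nonneg hu0 hu0]
  have hpoly : (3.15 : ℝ) < 4 * ((1 + u) ^ 3 * (1 - u / 3) ^ 6) := by
    have h2 : ((1 + u) * (1 - u / 3) ^ 2) ^ 3 ≥ (0.95:ℝ) ^ 3 :=
      pow_le_pow_left₀ (by norm_num) hr 3
    nlinarith [h2]
  have hπ : Real.pi < 3.15 := by
    have := Real.pi_lt_d2; linarith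
  have hmain : Real.pi < 4 * Real.exp (-(2*u)) * (1 + u) ^ 3 := by
    have h3 : 4 * ((1 + u) ^ 3 * (1 - u / 3) ^ 6) ≤ 4 * Real.exp (-(2*u)) * (1 + u)^3 := by
      have := mul_le_mul_of_nonneg_left h6 (by positivity : (0:ℝ) ≤ 4 * (1+u)^3)
      nlinarith [this]
    linarith
  -- now take square roots
  have hupos : (0:ℝ) < 1 + u := by positivity
  have hspos : 0 < Real.sqrt (1 + u) := Real.sqrt_pos.2 hupos
  have hsq : Real.sqrt (1 + u) ^ 2 = 1 + u := Real.sq_sqrt hupos.le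
  have hexp : Real.exp (-(2*u)) = Real.exp (-u) ^ 2 := by
    rw [← Real.exp_nat_mul]; ring_nf
  have hkey : Real.sqrt Real.pi < 2 * Real.exp (-u) * ((1 + u) * Real.sqrt (1 + u)) := by
    have h4 : Real.pi < (2 * Real.exp (-u) * ((1 + u) * Real.sqrt (1 + u))) ^ 2 := by
      have : ((1+u) * Real.sqrt (1+u))^2 = (1+u)^3 := by
        rw [mul_pow, hsq]; ring
      rw [mul_pow, mul_pow, this, ← hexp]
      nlinarith [hmain]
    exact (Real.sqrt_lt' (by positivity)).2 h4
  have hA : (0:ℝ) < (1 + u) * Real.sqrt (1 + u) := by positivity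
  rw [div_lt_iff₀ hA, div_mul_eq_mul_div, div_mul_eq_mul_div,
    lt_div_iff₀ (Real.sqrt_pos.2 Real.pi_pos)]
  nlinarith [hkey]

lemma cont_gauss2 : Continuous (fun t : ℝ => 2 / Real.sqrt Real.pi * Real.exp (-t ^ 2)) := by
  exact continuous_const.mul ((continuous_pow 2).neg.rexp)

lemma key_small {x : ℝ} (hx : 0 < x) (hx85 : x ≤ 0.85) :
    x / Real.sqrt (1 + x ^ 2) < erf x := by
  have hie : IntervalIntegrable
      (fun t : ℝ => 2 / Real.sqrt Real.pi * Real.exp (-t ^ 2)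
        - 1 / ((1 + t ^ 2) * Real.sqrt (1 + t ^ 2))) MeasureTheory.volume 0 x :=
    (cont_gauss2.sub cont_g).intervalIntegrable 0 x
  have hpos : 0 < ∫ t in (0:ℝ)..x,
      (2 / Real.sqrt Real.pi * Real.exp (-t ^ 2)
        - 1 / ((1 + t ^ 2) * Real.sqrt (1 + t ^ 2))) := by
    apply intervalIntegral.intervalIntegral_pos_of_pos_on hie _ hx
    intro t ht
    have ht0 : 0 ≤ t := ht.1.le
    have ht2 : t ^ 2 ≤ 0.7225 := by nlinarith [ht.2, hx85]
    linarith [pointwise_lt ht0 ht2]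
  rw [intervalIntegral.integral_sub (cont_gauss2.intervalIntegrable 0 x)
    (cont_g.intervalIntegrable 0 x), intervalIntegral.integral_const_mul, ftc_g] at hpos
  unfold erf
  linarith

lemma integrable_gauss : MeasureTheory.Integrable (fun t : ℝ => Real.exp (-t ^ 2)) := by
  have := integrable_exp_neg_mul_sq (show (0:ℝ) < 1 by norm_num)
  simpa using this

lemma gauss_Ioi_zero : ∫ t in Set.Ioi (0:ℝ), Real.exp (-t ^ 2) = Real.sqrt Real.pi / 2 := by
  have := integral_gaussian_Ioi 1
  simpa using this

lemma erf_eq_tail {x : ℝ} (hx : 0 ≤ x) :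
    erf x = 1 - 2 / Real.sqrt Real.pi * ∫ t in Set.Ioi x, Real.exp (-t ^ 2) := by
  have hsplit : (∫ t in Set.Ioc (0:ℝ) x, Real.exp (-t ^ 2))
      + ∫ t in Set.Ioi x, Real.exp (-t ^ 2) = Real.sqrt Real.pi / 2 := by
    rw [← gauss_Ioi_zero, ← Set.Ioc_union_Ioi_eq_Ioi hx]
    rw [MeasureTheory.setIntegral_union (Set.Ioc_disjoint_Ioi le_rfl) measurableSet_Ioi
      integrable_gauss.integrableOn integrable_gauss.integrableOn]
  have h0x : ∫ t in (0:ℝ)..x, Real.exp (-t ^ 2)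
      = ∫ t in Set.Ioc (0:ℝ) x, Real.exp (-t ^ 2) := intervalIntegral.integral_of_le hx
  unfold erf
  rw [h0x]
  have hπ : Real.sqrt Real.pi ≠ 0 := (Real.sqrt_pos.2 Real.pi_pos).ne'
  field_simp
  linarith [hsplit]

lemma tail_int {x : ℝ} (hx : 0 < x) :
    (∫ t in Set.Ioi x, t * Real.exp (-t ^ 2)) = Real.exp (-x ^ 2) / 2 ∧
      MeasureTheory.IntegrableOn (fun t : ℝ => t * Real.exp (-t ^ 2)) (Set.Ioi x) := by
  have hderiv : ∀ t ∈ Set.Ici x,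
      HasDerivAt (fun y : ℝ => -Real.exp (-y ^ 2) / 2) (t * Real.exp (-t ^ 2)) t := by
    intro t _
    have h1 : HasDerivAt (fun y : ℝ => -y ^ 2) (-(2 * t)) t := by
      simpa using ((hasDerivAt_pow 2 t).const_mul (-1 : ℝ))
    have h2 := (h1.exp.neg.div_const 2)
    refine h2.congr_deriv ?_
    ring
  have hnonneg : ∀ t ∈ Set.Ioi x, 0 ≤ t * Real.exp (-t ^ 2) := fun t ht =>
    mul_nonneg (hx.le.trans (le_of_lt ht)) (Real.exp_pos _).le
  have htend : Filter.Tendsto (fun y : ℝ => -Real.exp (-y ^ 2) / 2) Filter.atTop (nhds 0) := by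
    have h1 : Filter.Tendsto (fun y : ℝ => -y ^ 2) Filter.atTop Filter.atBot :=
      Filter.tendsto_neg_atTop_atBot.comp (Filter.tendsto_pow_atTop two_ne_zero)
    have h2 := (Real.tendsto_exp_atBot.comp h1).neg.div_const 2
    simpa using h2
  refine ⟨?_, ?_⟩
  · have := MeasureTheory.integral_Ioi_of_hasDerivAt_of_tendsto' hderiv
      (MeasureTheory.integrableOn_Ioi_deriv_of_nonneg' hderiv hnonneg htend) htend
    rw [this]; ring
  · exact MeasureTheory.integrableOn_Ioi_deriv_of_nonneg' hderiv hnonneg htend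

lemma final_ineq {x : ℝ} (hx85 : 0.85 ≤ x) :
    Real.exp (-x ^ 2) / (x * Real.sqrt Real.pi) < 1 - x / Real.sqrt (1 + x ^ 2) := by
  have hx : 0 < x := lt_of_lt_of_le (by norm_num) hx85
  set s := Real.sqrt (1 + x ^ 2) with hs
  have hupos : (0:ℝ) < 1 + x ^ 2 := by positivity
  have hspos : 0 < s := Real.sqrt_pos.2 hupos
  have hs2 : s ^ 2 = 1 + x ^ 2 := Real.sq_sqrt hupos.le
  have hsx : s ≤ x + 1 / (2 * x) := by
    have h1 : 1 + x ^ 2 ≤ (x + 1 / (2 * x)) ^ 2 := by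
      have h2 : (x + 1 / (2 * x)) ^ 2 = x ^ 2 + 1 + 1 / (4 * x ^ 2) := by
        field_simp; ring
      rw [h2]
      have : 0 < 1 / (4 * x ^ 2) := by positivity
      linarith
    calc s ≤ Real.sqrt ((x + 1 / (2 * x)) ^ 2) := Real.sqrt_le_sqrt h1
      _ = x + 1 / (2 * x) := Real.sqrt_sq (by positivity)
  have hgoal1 : 1 - x / s = 1 / (s * (s + x)) := by
    have hdiff : (s - x) * (s + x) = 1 := by nlinarith [hs2]
    field_simp
    nlinarith [hdiff]
  have hexp : 1 + x ^ 2 + x ^ 4 / 2 + x ^ 6 / 6 ≤ Real.exp (x ^ 2) := by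
    have h := Real.sum_le_exp_of_nonneg (sq_nonneg x) 4
    have h2 : ∑ i ∈ Finset.range 4, (x ^ 2) ^ i / (Nat.factorial i : ℝ)
        = 1 + x ^ 2 + x ^ 4 / 2 + x ^ 6 / 6 := by
      simp [Finset.sum_range_succ, Nat.factorial]
      ring
    linarith [h2 ▸ h]
  have hpi : (1.77 : ℝ) < Real.sqrt Real.pi := by
    rw [show (1.77:ℝ) = Real.sqrt (1.77 ^ 2) from (Real.sqrt_sq (by norm_num)).symm]
    apply Real.sqrt_lt_sqrt (by norm_num)
    nlinarith [Real.pi_gt_d6]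
  have h3 : 2 * x ^ 2 + 3 / 2 < 1.77 * x * (1 + x ^ 2 + x ^ 4 / 2 + x ^ 6 / 6) := by
    nlinarith [hx85, sq_nonneg (x - 0.85), sq_nonneg x, pow_le_pow_left₀ (by norm_num : (0:ℝ) ≤ 0.85) hx85 3, pow_le_pow_left₀ (by norm_num : (0:ℝ) ≤ 0.85) hx85 5, pow_le_pow_left₀ (by norm_num : (0:ℝ) ≤ 0.85) hx85 7]
  have h2 : Real.exp (-x ^ 2) * (2 * x ^ 2 + 3 / 2) < 1.77 * x := by
    rw [Real.exp_neg, inv_mul_eq_div, div_lt_iff₀ (Real.exp_pos _)]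
    calc 2 * x ^ 2 + 3 / 2 < 1.77 * x * (1 + x ^ 2 + x ^ 4 / 2 + x ^ 6 / 6) := h3
      _ ≤ 1.77 * x * Real.exp (x ^ 2) :=
          mul_le_mul_of_nonneg_left hexp (by positivity)
      _ = 1.77 * x * Real.exp (x ^ 2) := rfl
  have hss : s * (s + x) ≤ 2 * x ^ 2 + 3 / 2 := by
    have h4 : s * x ≤ (x + 1 / (2 * x)) * x := mul_le_mul_of_nonneg_right hsx hx.le
    have h5 : (x + 1 / (2 * x)) * x = x ^ 2 + 1 / 2 := by field_simp
    nlinarith [hs2]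
  have hkey : Real.exp (-x ^ 2) * (s * (s + x)) < x * Real.sqrt Real.pi := by
    calc Real.exp (-x ^ 2) * (s * (s + x)) ≤ Real.exp (-x ^ 2) * (2 * x ^ 2 + 3 / 2) :=
          mul_le_mul_of_nonneg_left hss (Real.exp_pos _).le
      _ < 1.77 * x := h2
      _ < x * Real.sqrt Real.pi := by nlinarith [hpi, hx]
  rw [hgoal1, div_lt_div_iff₀ (by positivity) (by positivity)]
  nlinarith [hkey]

lemma key_large {x : ℝ} (hx85 : 0.85 ≤ x) :
    x / Real.sqrt (1 + x ^ 2) < erf x := by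
  have hx : 0 < x := lt_of_lt_of_le (by norm_num) hx85
  obtain ⟨hval, hint⟩ := tail_int hx
  have hmono : (∫ t in Set.Ioi x, Real.exp (-t ^ 2)) ≤ Real.exp (-x ^ 2) / (2 * x) := by
    have h1 : (∫ t in Set.Ioi x, Real.exp (-t ^ 2))
        ≤ ∫ t in Set.Ioi x, 1 / x * (t * Real.exp (-t ^ 2)) := by
      apply MeasureTheory.setIntegral_mono_on integrable_gauss.integrableOn
        (hint.const_mul _) measurableSet_Ioi
      intro t ht
      have h2 : 1 ≤ t / x := (one_le_div hx).2 (le_of_lt ht)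
      calc Real.exp (-t ^ 2) = 1 * Real.exp (-t ^ 2) := (one_mul _).symm
        _ ≤ t / x * Real.exp (-t ^ 2) :=
            mul_le_mul_of_nonneg_right h2 (Real.exp_pos _).le
        _ = 1 / x * (t * Real.exp (-t ^ 2)) := by ring
    rw [MeasureTheory.integral_const_mul, hval] at h1
    calc (∫ t in Set.Ioi x, Real.exp (-t ^ 2)) ≤ 1 / x * (Real.exp (-x ^ 2) / 2) := h1
      _ = Real.exp (-x ^ 2) / (2 * x) := by ring
  rw [erf_eq_tail hx.le]
  have hπ : 0 < Real.sqrt Real.pi := Real.sqrt_pos.2 Real.pi_pos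
  have h6 : 2 / Real.sqrt Real.pi * (∫ t in Set.Ioi x, Real.exp (-t ^ 2))
      ≤ 2 / Real.sqrt Real.pi * (Real.exp (-x ^ 2) / (2 * x)) :=
    mul_le_mul_of_nonneg_left hmono (by positivity)
  have h7 : 2 / Real.sqrt Real.pi * (Real.exp (-x ^ 2) / (2 * x))
      = Real.exp (-x ^ 2) / (x * Real.sqrt Real.pi) := by
    field_simp
  linarith [final_ineq hx85, h7 ▸ h6]

lemma key (x : ℝ) (hx : 0 < x) : x / Real.sqrt (1 + x ^ 2) < erf x := by
  rcases le_or_gt x 0.85 with h | h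
  · exact key_small hx h
  · exact key_large h.le

lemma gauss_intable (a b : ℝ) :
    IntervalIntegrable (fun t : ℝ => Real.exp (-t ^ 2)) MeasureTheory.volume a b :=
  ((continuous_pow 2).neg.rexp).intervalIntegrable a b

lemma erf_mono {a b : ℝ} (h : a ≤ b) : erf a ≤ erf b := by
  unfold erf
  apply mul_le_mul_of_nonneg_left _ (by positivity)
  have hsplit := intervalIntegral.integral_add_adjacent_intervals
    (gauss_intable 0 a) (gauss_intable a b)
  have hnn : 0 ≤ ∫ t in a..b, Real.exp (-t ^ 2) :=
    intervalIntegral.integral_nonneg h (fun t _ => (Real.exp_pos _).le)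
  linarith [hsplit]

/-- For every integer `n ≥ 2` and every `ε ∈ (0, 1/2)`,
`P^upper(n; ε) ≤ P^upper(2; ε) < ε`. -/
theorem Pupper_le_Pupper_two_lt (n : ℕ) (hn : 2 ≤ n) (ε : ℝ)
    (hε : ε ∈ Set.Ioo (0 : ℝ) (1 / 2)) :
    Pupper n ε ≤ Pupper 2 ε ∧ Pupper 2 ε < ε := by
  obtain ⟨hε0, hε2⟩ := hε
  have h1ε : 0 < 1 - ε := by linarith
  set d := Real.sqrt (2 * ε * (1 - ε)) with hd
  have hdpos : 0 < d := Real.sqrt_pos.2 (by positivity)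
  have hc : 0 < 1 / 2 - ε := by linarith
  -- the argument for general n
  have harg : ∀ m : ℕ, 2 ≤ m →
      ((m : ℝ) / 2 - (m : ℝ) * ε) / Real.sqrt (2 * (m : ℝ) * ε * (1 - ε))
        = Real.sqrt (m : ℝ) * ((1 / 2 - ε) / d) := by
    intro m hm
    have hm0 : (0:ℝ) < (m : ℝ) := by
      exact_mod_cast lt_of_lt_of_le two_pos hm
    have hsm : Real.sqrt (m:ℝ) * Real.sqrt (m:ℝ) = (m:ℝ) := Real.mul_self_sqrt hm0.le
    have hsmpos : 0 < Real.sqrt (m:ℝ) := Real.sqrt_pos.2 hm0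
    rw [show 2 * (m:ℝ) * ε * (1 - ε) = (m:ℝ) * (2 * ε * (1 - ε)) by ring,
      Real.sqrt_mul hm0.le, show (m:ℝ) / 2 - (m:ℝ) * ε
        = (Real.sqrt (m:ℝ) * Real.sqrt (m:ℝ)) * (1 / 2 - ε) by rw [hsm]; ring]
    rw [← hd]
    field_simp
  have ha2 := harg 2 le_rfl
  have han := harg n hn
  constructor
  · unfold Pupper
    rw [show ((2:ℕ):ℝ) = (2:ℝ) by norm_num] at ha2 ⊢
    rw [ha2, han]
    have hle : erf (Real.sqrt 2 * ((1 / 2 - ε) / d))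
        ≤ erf (Real.sqrt (n:ℝ) * ((1 / 2 - ε) / d)) := by
      apply erf_mono
      apply mul_le_mul_of_nonneg_right _ (div_nonneg hc.le hdpos.le)
      exact Real.sqrt_le_sqrt (by exact_mod_cast hn)
    linarith
  · set D := Real.sqrt (4 * ε * (1 - ε)) with hDdef
    have hDpos : 0 < D := Real.sqrt_pos.2 (by positivity)
    have hD2 : D ^ 2 = 4 * ε * (1 - ε) := Real.sq_sqrt (by positivity)
    set x := (1 - 2 * ε) / D with hxdef
    have hP2 : Pupper 2 ε = 1 / 2 * (1 - erf x) := by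
      unfold Pupper
      rw [show ((2:ℕ):ℝ) = (2:ℝ) by norm_num,
        show (2:ℝ) / 2 - 2 * ε = 1 - 2 * ε by ring,
        show 2 * (2:ℝ) * ε * (1 - ε) = 4 * ε * (1 - ε) by ring]
    have hxpos : 0 < x := div_pos (by linarith) hDpos
    have h1x : 1 + x ^ 2 = (1 / D) ^ 2 := by
      rw [hxdef, div_pow, div_pow, hD2]
      field_simp
      nlinarith [hD2]
    have hxs : x / Real.sqrt (1 + x ^ 2) = 1 - 2 * ε := by
      rw [h1x, Real.sqrt_sq (by positivity)]
      rw [hxdef]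
      field_simp
    have hkey := key x hxpos
    rw [hxs] at hkey
    rw [hP2]
    linarith

end Aux
end
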